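/- Let n ≥ 1, let q > 0 with q ≠ 1, and let Φ : Matrix (Fin n) ℂ →ₗ[ℂ] Matrix (Fin n) ℂ be a positive trace-preserving linear map. Then Φ is unital (Φ 1 = 1) if and only if Φ does not decrease the Rényi entropy of parameter q, i.e. R_q(Φ ρ) ≥ R_q(ρ) for every density matrix ρ, where R_q(ρ) = (Real.log (∑_k λ_k(ρ)^q))/(1 − q) and λ_k(ρ) are the eigenvalues of ρ. -/

import Mathlib

open scoped Matrix ComplexOrder
open Matrix
set_option maxHeartbeats 1000000

/-- A density matrix: positive semidefinite with unit trace. -/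
def IsDensityMatrix {n : ℕ} (ρ : Matrix (Fin n) (Fin n) ℂ) : Prop :=
  ρ.PosSemidef ∧ ρ.trace = 1

/-- The (real) eigenvalues of a matrix, via its Hermitian spectral decomposition
(junk value `0` if the matrix is not Hermitian). -/
noncomputable def eigs {n : ℕ} (A : Matrix (Fin n) (Fin n) ℂ) : Fin n → ℝ :=
  if h : A.IsHermitian then h.eigenvalues else 0

/-- A linear map on matrices is positive if it preserves positive semidefiniteness. -/
def IsPositiveMap {n : ℕ}
    (Φ : Matrix (Fin n) (Fin n) ℂ →ₗ[ℂ] Matrix (Fin n) (Fin n) ℂ) : Prop :=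
  ∀ A : Matrix (Fin n) (Fin n) ℂ, A.PosSemidef → (Φ A).PosSemidef

/-- A linear map on matrices is trace-preserving if it preserves the trace. -/
def IsTracePreserving {n : ℕ}
    (Φ : Matrix (Fin n) (Fin n) ℂ →ₗ[ℂ] Matrix (Fin n) (Fin n) ℂ) : Prop :=
  ∀ A : Matrix (Fin n) (Fin n) ℂ, (Φ A).trace = A.trace


/-- The Rényi entropy of parameter `q`: `R_q(ρ) = log (∑ λ_k^q) / (1 - q)`. -/
noncomputable def renyiEntropy {n : ℕ} (q : ℝ) (A : Matrix (Fin n) (Fin n) ℂ) : ℝ :=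
  Real.log (∑ k, eigs A k ^ q) / (1 - q)

lemma myTraceNonneg {n : ℕ} {M : Matrix (Fin n) (Fin n) ℂ}
    (hM : M.PosSemidef) : 0 ≤ M.trace := by
  rw [Matrix.trace]
  refine Finset.sum_nonneg fun i _ => ?_
  exact hM.diag_nonneg

lemma traceEqSumEigs {n : ℕ} {A : Matrix (Fin n) (Fin n) ℂ} (hA : A.IsHermitian) :
    A.trace = ∑ k, (hA.eigenvalues k : ℂ) := by
  conv_lhs => rw [hA.spectral_theorem, Unitary.conjStarAlgAut_apply]
  rw [Matrix.trace_mul_cycle]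
  have hUU : (star (hA.eigenvectorUnitary : Matrix (Fin n) (Fin n) ℂ)) *
      (hA.eigenvectorUnitary : Matrix (Fin n) (Fin n) ℂ) = 1 :=
    Matrix.mem_unitaryGroup_iff'.mp (hA.eigenvectorUnitary).2
  rw [hUU, one_mul, Matrix.trace_diagonal]
  rfl

lemma spectralPackage {n : ℕ} {A : Matrix (Fin n) (Fin n) ℂ} (hA : A.IsHermitian) :
    ∃ P : Fin n → Matrix (Fin n) (Fin n) ℂ,
      (∀ k, (P k).PosSemidef) ∧
      (∀ k (M : Matrix (Fin n) (Fin n) ℂ), M.PosSemidef → 0 ≤ (P k * M).trace) ∧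
      (∀ k, (P k).trace = 1) ∧
      (∑ k, P k = 1) ∧
      (A = ∑ k, (hA.eigenvalues k : ℂ) • P k) ∧
      (∀ j, (P j * A).trace = (hA.eigenvalues j : ℂ)) := by
  obtain ⟨U, hUU, hUU', hspec⟩ :
      ∃ U : Matrix (Fin n) (Fin n) ℂ, star U * U = 1 ∧ U * star U = 1 ∧
        A = U * Matrix.diagonal ((RCLike.ofReal ∘ hA.eigenvalues) : Fin n → ℂ) * star U :=
    ⟨(hA.eigenvectorUnitary : Matrix (Fin n) (Fin n) ℂ),
      Matrix.mem_unitaryGroup_iff'.mp (hA.eigenvectorUnitary).2,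
      Matrix.mem_unitaryGroup_iff.mp (hA.eigenvectorUnitary).2,
      hA.spectral_theorem⟩
  set d : Fin n → ℂ := ((RCLike.ofReal ∘ hA.eigenvalues) : Fin n → ℂ) with hd
  have hE0 : ∀ k : Fin n, (0 : Fin n → ℂ) ≤ Pi.single k 1 := by
    intro k i
    by_cases h : i = k <;> simp [Pi.single_apply, h]
  have hEpsd : ∀ k : Fin n, (Matrix.diagonal (Pi.single k (1:ℂ))).PosSemidef :=
    fun k => Matrix.PosSemidef.diagonal (hE0 k)
  have hEstar : ∀ k : Fin n, star (Matrix.diagonal (Pi.single k (1:ℂ)))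
      = Matrix.diagonal (Pi.single k (1:ℂ)) := fun k => by
    rw [Matrix.star_eq_conjTranspose]; exact (hEpsd k).1
  have hEE : ∀ k : Fin n, Matrix.diagonal (Pi.single k (1:ℂ)) * Matrix.diagonal (Pi.single k (1:ℂ))
      = Matrix.diagonal (Pi.single k (1:ℂ)) := by
    intro k
    rw [Matrix.diagonal_mul_diagonal]
    refine congrArg Matrix.diagonal (funext fun i => ?_)
    by_cases h : i = k <;> simp [Pi.single_apply, h]
  refine ⟨fun k => U * Matrix.diagonal (Pi.single k (1:ℂ)) * star U, ?_, ?_, ?_, ?_, ?_, ?_⟩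
  · intro k
    have := (hEpsd k).mul_mul_conjTranspose_same U
    simpa [Matrix.star_eq_conjTranspose] using this
  · intro k M hM
    have hEE' : ∀ X : Matrix (Fin n) (Fin n) ℂ,
        Matrix.diagonal (Pi.single k (1:ℂ)) * (Matrix.diagonal (Pi.single k (1:ℂ)) * X)
          = Matrix.diagonal (Pi.single k (1:ℂ)) * X := fun X => by
      rw [← mul_assoc, hEE]
    have h1 : (U * Matrix.diagonal (Pi.single k (1:ℂ)) * star U) * M
        = (U * Matrix.diagonal (Pi.single k (1:ℂ)))
          * (star (U * Matrix.diagonal (Pi.single k (1:ℂ))) * M) := by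
      simp only [StarMul.star_mul, hEstar, mul_assoc, hEE']
    rw [h1, Matrix.trace_mul_comm]
    have hpsd : ((star (U * Matrix.diagonal (Pi.single k (1:ℂ)))) * M
        * (U * Matrix.diagonal (Pi.single k (1:ℂ)))).PosSemidef := by
      have := hM.conjTranspose_mul_mul_same (U * Matrix.diagonal (Pi.single k (1:ℂ)))
      simpa [Matrix.star_eq_conjTranspose] using this
    exact myTraceNonneg hpsd
  · intro k
    rw [Matrix.trace_mul_cycle, hUU, one_mul, Matrix.trace_diagonal]
    simp [Pi.single_apply]
  · rw [← Finset.sum_mul, ← Finset.mul_sum]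
    have h2 : (∑ k, Matrix.diagonal (Pi.single k (1:ℂ)) : Matrix (Fin n) (Fin n) ℂ) = 1 := by
      ext i j
      by_cases h : i = j <;>
        simp [Matrix.sum_apply, Matrix.diagonal_apply, Pi.single_apply, h, Matrix.one_apply]
    rw [h2, mul_one, hUU']
  · have hdiag : Matrix.diagonal d
        = ∑ k, (hA.eigenvalues k : ℂ) • Matrix.diagonal (Pi.single k (1:ℂ)) := by
      ext i j
      by_cases h : i = j <;>
        simp [hd, Matrix.sum_apply, Matrix.diagonal_apply, Pi.single_apply, h,
          Matrix.smul_apply, mul_ite]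
    conv_lhs => rw [hspec]
    rw [hdiag]
    simp only [Finset.mul_sum, Finset.sum_mul, mul_smul_comm, smul_mul_assoc]
  · intro j
    have hcancel : ∀ X : Matrix (Fin n) (Fin n) ℂ, star U * (U * X) = X := fun X => by
      rw [← mul_assoc, hUU, one_mul]
    have h1 : (U * Matrix.diagonal (Pi.single j (1:ℂ)) * star U) * A
        = U * (Matrix.diagonal (Pi.single j (1:ℂ)) * (Matrix.diagonal d * star U)) := by
      conv_lhs => rw [hspec]
      simp only [mul_assoc, hcancel]
    rw [h1, Matrix.trace_mul_comm,
      show (Matrix.diagonal (Pi.single j (1:ℂ)) * (Matrix.diagonal d * star U)) * U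
        = Matrix.diagonal (Pi.single j (1:ℂ)) * Matrix.diagonal d * (star U * U) by
          simp only [mul_assoc],
      hUU, mul_one, Matrix.diagonal_mul_diagonal, Matrix.trace_diagonal]
    simp [hd, Pi.single_apply]

lemma eigs_of_isHermitian {n : ℕ} {A : Matrix (Fin n) (Fin n) ℂ} (hA : A.IsHermitian) :
    eigs A = hA.eigenvalues := by
  rw [eigs, dif_pos hA]

lemma eigs_nonneg {n : ℕ} {A : Matrix (Fin n) (Fin n) ℂ} (hA : A.PosSemidef) (k : Fin n) :
    0 ≤ eigs A k := by
  rw [eigs_of_isHermitian hA.1]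
  exact hA.eigenvalues_nonneg k

lemma sum_eigs_eq_one {n : ℕ} {A : Matrix (Fin n) (Fin n) ℂ} (hA : A.IsHermitian)
    (htr : A.trace = 1) : ∑ k, eigs A k = 1 := by
  rw [eigs_of_isHermitian hA]
  have h := (traceEqSumEigs hA).symm.trans htr
  have h2 : ((∑ k, hA.eigenvalues k : ℝ) : ℂ) = ((1 : ℝ) : ℂ) := by push_cast; simpa using h
  exact_mod_cast h2

lemma exists_doublyStochastic {n : ℕ}
    (Φ : Matrix (Fin n) (Fin n) ℂ →ₗ[ℂ] Matrix (Fin n) (Fin n) ℂ)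
    (hpos : IsPositiveMap Φ) (htp : IsTracePreserving Φ) (hu : Φ 1 = 1)
    {ρ : Matrix (Fin n) (Fin n) ℂ} (hρ : ρ.PosSemidef) :
    ∃ w : Fin n → Fin n → ℝ,
      (∀ j k, 0 ≤ w j k) ∧ (∀ j, ∑ k, w j k = 1) ∧ (∀ k, ∑ j, w j k = 1) ∧
      (∀ j, eigs (Φ ρ) j = ∑ k, w j k * eigs ρ k) := by
  obtain ⟨P, hPpsd, hPtr0, hPtr1, hPsum, hPdec, hPeig⟩ := spectralPackage hρ.1
  have hB : (Φ ρ).PosSemidef := hpos ρ hρ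
  obtain ⟨Q, hQpsd, hQtr0, hQtr1, hQsum, hQdec, hQeig⟩ := spectralPackage hB.1
  set c : Fin n → Fin n → ℂ := fun j k => (Q j * Φ (P k)).trace with hc
  have hc0 : ∀ j k, 0 ≤ c j k := fun j k => hQtr0 j _ (hpos _ (hPpsd k))
  refine ⟨fun j k => (c j k).re, ?_, ?_, ?_, ?_⟩
  · intro j k
    exact (Complex.nonneg_iff.mp (hc0 j k)).1
  · intro j
    have h1 : ∑ k, c j k = 1 := by
      calc ∑ k, (Q j * Φ (P k)).trace = (Q j * Φ (∑ k, P k)).trace := by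
            rw [map_sum, Finset.mul_sum, Matrix.trace_sum]
        _ = 1 := by rw [hPsum, hu, mul_one, hQtr1]
    have h2 : ((∑ k, (c j k).re : ℝ) : ℂ) = ((1:ℝ) : ℂ) := by
      push_cast
      rw [show (∑ k, ((c j k).re : ℂ)) = ∑ k, c j k from
        Finset.sum_congr rfl fun k _ => Complex.ext (by simp)
          (by simp [(Complex.nonneg_iff.mp (hc0 j k)).2.symm]), h1]
    exact_mod_cast h2
  · intro k
    have h1 : ∑ j, c j k = 1 := by
      calc ∑ j, (Q j * Φ (P k)).trace = ((∑ j, Q j) * Φ (P k)).trace := by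
            rw [Finset.sum_mul, Matrix.trace_sum]
        _ = (P k).trace := by rw [hQsum, one_mul, htp]
        _ = 1 := hPtr1 k
    have h2 : ((∑ j, (c j k).re : ℝ) : ℂ) = ((1:ℝ) : ℂ) := by
      push_cast
      rw [show (∑ j, ((c j k).re : ℂ)) = ∑ j, c j k from
        Finset.sum_congr rfl fun j _ => Complex.ext (by simp)
          (by simp [(Complex.nonneg_iff.mp (hc0 j k)).2.symm]), h1]
    exact_mod_cast h2
  · intro j
    have h1 : (Q j * Φ ρ).trace = ∑ k, (hρ.1.eigenvalues k : ℂ) * c j k := by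
      conv_lhs => rw [show Φ ρ = ∑ k, (hρ.1.eigenvalues k : ℂ) • Φ (P k) by
        conv_lhs => rw [show ρ = ∑ k, (hρ.1.eigenvalues k : ℂ) • P k from hPdec]
        rw [map_sum]
        exact Finset.sum_congr rfl fun k _ => map_smul Φ _ _]
      rw [Finset.mul_sum, Matrix.trace_sum]
      exact Finset.sum_congr rfl fun k _ => by rw [mul_smul_comm, Matrix.trace_smul, smul_eq_mul]
    have h2 : ((eigs (Φ ρ) j : ℝ) : ℂ) = ((∑ k, (c j k).re * eigs ρ k : ℝ) : ℂ) := by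
      rw [eigs_of_isHermitian hB.1, eigs_of_isHermitian hρ.1]
      push_cast
      rw [← hQeig j, h1]
      refine Finset.sum_congr rfl fun k _ => ?_
      have himk : (c j k).im = 0 := (Complex.nonneg_iff.mp (hc0 j k)).2.symm
      have : ((c j k).re : ℂ) = c j k := Complex.ext (by simp) (by simp [himk])
      rw [this]; ring
    exact_mod_cast h2

lemma sum_rpow_pos {n : ℕ} {v : Fin n → ℝ} (h0 : ∀ k, 0 ≤ v k)
    (hsum : ∑ k, v k = 1) {q : ℝ} (hq : 0 < q) : 0 < ∑ k, v k ^ q := by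
  obtain ⟨k0, _, hk0⟩ := Finset.exists_ne_zero_of_sum_ne_zero (by rw [hsum]; norm_num :
    ∑ k, v k ≠ 0)
  refine Finset.sum_pos' (fun k _ => Real.rpow_nonneg (h0 k) q) ⟨k0, Finset.mem_univ k0, ?_⟩
  exact Real.rpow_pos_of_pos (lt_of_le_of_ne (h0 k0) (Ne.symm hk0)) q

lemma smul_one_posSemidef {n : ℕ} {c : ℝ} (hc : 0 ≤ c) :
    (((c : ℝ) : ℂ) • (1 : Matrix (Fin n) (Fin n) ℂ)).PosSemidef := by
  have h : ((c : ℂ) • (1 : Matrix (Fin n) (Fin n) ℂ)) = Matrix.diagonal (fun _ => (c : ℂ)) := by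
    ext i j
    by_cases hij : i = j <;> simp [Matrix.one_apply, Matrix.diagonal_apply, hij]
  rw [h]
  exact Matrix.PosSemidef.diagonal fun i => Complex.zero_le_real.mpr hc

lemma eigs_smul_one {n : ℕ} {c : ℝ} (hc : 0 ≤ c) :
    eigs (((c : ℝ) : ℂ) • (1 : Matrix (Fin n) (Fin n) ℂ)) = fun _ => c := by
  have hA : (((c : ℝ) : ℂ) • (1 : Matrix (Fin n) (Fin n) ℂ)).IsHermitian :=
    (smul_one_posSemidef hc).1
  rw [eigs_of_isHermitian hA]
  funext k
  obtain ⟨U, hUU, h2⟩ :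
      ∃ U : Matrix (Fin n) (Fin n) ℂ, star U * U = 1 ∧
        ((c : ℝ) : ℂ) • (1 : Matrix (Fin n) (Fin n) ℂ)
          = U * Matrix.diagonal ((RCLike.ofReal ∘ hA.eigenvalues) : Fin n → ℂ) * star U :=
    ⟨(hA.eigenvectorUnitary : Matrix (Fin n) (Fin n) ℂ),
      Matrix.mem_unitaryGroup_iff'.mp (hA.eigenvectorUnitary).2, hA.spectral_theorem⟩
  have h4 : star U * ((((c : ℝ) : ℂ) • (1 : Matrix (Fin n) (Fin n) ℂ))) * U
      = ((c : ℝ) : ℂ) • (1 : Matrix (Fin n) (Fin n) ℂ) := by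
    rw [mul_smul_comm, smul_mul_assoc, mul_one, hUU]
  have hstep : star U * (U * (Matrix.diagonal ((RCLike.ofReal ∘ hA.eigenvalues) : Fin n → ℂ)
      * star U)) * U = Matrix.diagonal ((RCLike.ofReal ∘ hA.eigenvalues) : Fin n → ℂ) := by
    rw [← mul_assoc (star U) U, hUU, one_mul, mul_assoc, hUU, mul_one]
  have h3 : Matrix.diagonal ((RCLike.ofReal ∘ hA.eigenvalues) : Fin n → ℂ)
      = ((c : ℝ) : ℂ) • (1 : Matrix (Fin n) (Fin n) ℂ) := by
    calc Matrix.diagonal ((RCLike.ofReal ∘ hA.eigenvalues) : Fin n → ℂ)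
        = star U * (U * (Matrix.diagonal ((RCLike.ofReal ∘ hA.eigenvalues) : Fin n → ℂ)
            * star U)) * U := hstep.symm
      _ = star U * (U * Matrix.diagonal ((RCLike.ofReal ∘ hA.eigenvalues) : Fin n → ℂ)
            * star U) * U := by rw [mul_assoc U]
      _ = star U * ((((c : ℝ) : ℂ) • (1 : Matrix (Fin n) (Fin n) ℂ))) * U := by rw [← h2]
      _ = ((c : ℝ) : ℂ) • (1 : Matrix (Fin n) (Fin n) ℂ) := h4
  have h5 := congrFun (congrFun h3 k) k
  simp only [Matrix.diagonal_apply_eq, Matrix.smul_apply, Matrix.one_apply_eq, smul_eq_mul,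
    mul_one, Function.comp_apply] at h5
  exact Complex.ofReal_injective h5

lemma eq_smul_one_of_eigs_const {n : ℕ} {A : Matrix (Fin n) (Fin n) ℂ}
    (hA : A.IsHermitian) {c : ℝ} (h : ∀ k, hA.eigenvalues k = c) :
    A = ((c : ℝ) : ℂ) • (1 : Matrix (Fin n) (Fin n) ℂ) := by
  have hUU' : (hA.eigenvectorUnitary : Matrix (Fin n) (Fin n) ℂ) *
      star (hA.eigenvectorUnitary : Matrix (Fin n) (Fin n) ℂ) = 1 :=
    Matrix.mem_unitaryGroup_iff.mp (hA.eigenvectorUnitary).2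
  have hdiag : Matrix.diagonal ((RCLike.ofReal ∘ hA.eigenvalues) : Fin n → ℂ)
      = ((c : ℝ) : ℂ) • (1 : Matrix (Fin n) (Fin n) ℂ) := by
    ext i j
    by_cases hij : i = j <;>
      simp [Matrix.diagonal_apply, Matrix.one_apply, hij, h]
  conv_lhs => rw [hA.spectral_theorem, Unitary.conjStarAlgAut_apply]
  rw [hdiag, mul_smul_comm, smul_mul_assoc, mul_one, hUU']

/-- A positive trace-preserving linear map `Φ` is unital iff it does not
decrease the Rényi entropy of parameter `q` (`0 < q ≠ 1`) on density matrices. -/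
theorem unital_iff_renyiEntropy_nondecreasing {n : ℕ} (hn : 1 ≤ n)
    {q : ℝ} (hq0 : 0 < q) (hq1 : q ≠ 1)
    (Φ : Matrix (Fin n) (Fin n) ℂ →ₗ[ℂ] Matrix (Fin n) (Fin n) ℂ)
    (hpos : IsPositiveMap Φ) (htp : IsTracePreserving Φ) :
    Φ 1 = 1 ↔
      ∀ ρ : Matrix (Fin n) (Fin n) ℂ, IsDensityMatrix ρ →
        renyiEntropy q ρ ≤ renyiEntropy q (Φ ρ) := by
  constructor
  · -- forward: unital implies entropy nondecreasing
    intro hu ρ hρd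
    obtain ⟨hρ, htr⟩ := hρd
    have hB : (Φ ρ).PosSemidef := hpos ρ hρ
    have htrB : (Φ ρ).trace = 1 := (htp ρ).trans htr
    obtain ⟨w, hw0, hwrow, hwcol, heig⟩ := exists_doublyStochastic Φ hpos htp hu hρ
    have hl0 : ∀ k, 0 ≤ eigs ρ k := eigs_nonneg hρ
    have hm0 : ∀ k, 0 ≤ eigs (Φ ρ) k := eigs_nonneg hB
    have hlsum : ∑ k, eigs ρ k = 1 := sum_eigs_eq_one hρ.1 htr
    have hmsum : ∑ k, eigs (Φ ρ) k = 1 := sum_eigs_eq_one hB.1 htrB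
    have hSl : 0 < ∑ k, eigs ρ k ^ q := sum_rpow_pos hl0 hlsum hq0
    have hSm : 0 < ∑ k, eigs (Φ ρ) k ^ q := sum_rpow_pos hm0 hmsum hq0
    rcases lt_or_gt_of_ne hq1 with hlt | hgt
    · -- 0 < q < 1 : concave case
      have key : ∀ j, ∑ k, w j k * eigs ρ k ^ q ≤ eigs (Φ ρ) j ^ q := by
        intro j
        have hcc := (Real.strictConcaveOn_rpow hq0 hlt).concaveOn
        have h := hcc.le_map_sum (fun k _ => hw0 j k) (hwrow j)
          (fun k _ => Set.mem_Ici.mpr (hl0 k))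
        rw [heig j]
        simpa [smul_eq_mul] using h
      have hsums : ∑ k, eigs ρ k ^ q ≤ ∑ j, eigs (Φ ρ) j ^ q := by
        calc ∑ k, eigs ρ k ^ q = ∑ k, (∑ j, w j k) * eigs ρ k ^ q := by
              refine Finset.sum_congr rfl fun k _ => ?_
              rw [hwcol k, one_mul]
          _ = ∑ j, ∑ k, w j k * eigs ρ k ^ q := by
              rw [Finset.sum_comm]
              exact Finset.sum_congr rfl fun k _ => Finset.sum_mul _ _ _
          _ ≤ ∑ j, eigs (Φ ρ) j ^ q := Finset.sum_le_sum fun j _ => key j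
      have h1q : 0 < 1 - q := by linarith
      unfold renyiEntropy
      have hlog := Real.log_le_log hSl hsums
      exact div_le_div_of_nonneg_right hlog h1q.le
    · -- q > 1 : convex case
      have key : ∀ j, eigs (Φ ρ) j ^ q ≤ ∑ k, w j k * eigs ρ k ^ q := by
        intro j
        have hcv := convexOn_rpow hgt.le
        have h := hcv.map_sum_le (fun k _ => hw0 j k) (hwrow j)
          (fun k _ => Set.mem_Ici.mpr (hl0 k))
        rw [heig j]
        simpa [smul_eq_mul] using h
      have hsums : ∑ j, eigs (Φ ρ) j ^ q ≤ ∑ k, eigs ρ k ^ q := by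
        calc ∑ j, eigs (Φ ρ) j ^ q ≤ ∑ j, ∑ k, w j k * eigs ρ k ^ q :=
              Finset.sum_le_sum fun j _ => key j
          _ = ∑ k, (∑ j, w j k) * eigs ρ k ^ q := by
              rw [Finset.sum_comm]
              exact Finset.sum_congr rfl fun k _ => (Finset.sum_mul _ _ _).symm
          _ = ∑ k, eigs ρ k ^ q := by
              refine Finset.sum_congr rfl fun k _ => ?_
              rw [hwcol k, one_mul]
      have h1q : 1 - q < 0 := by linarith
      unfold renyiEntropy
      rw [div_eq_mul_inv, div_eq_mul_inv]
      exact mul_le_mul_of_nonpos_right (Real.log_le_log hSm hsums) (inv_nonpos.mpr h1q.le)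
  · -- reverse: entropy nondecreasing implies unital
    intro h
    have hn0 : (0 : ℝ) < n := by exact_mod_cast hn
    have hnne : (n : ℝ) ≠ 0 := ne_of_gt hn0
    set c : ℝ := (n : ℝ)⁻¹ with hcdef
    have hc : 0 < c := inv_pos.mpr hn0
    set ρ0 : Matrix (Fin n) (Fin n) ℂ := ((c : ℝ) : ℂ) • 1 with hρ0def
    have hρ0psd : ρ0.PosSemidef := smul_one_posSemidef hc.le
    have hnc : ((n : ℝ) : ℂ) * ((c : ℝ) : ℂ) = 1 := by
      rw [← Complex.ofReal_mul, hcdef, mul_inv_cancel₀ hnne, Complex.ofReal_one]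
    have hρ0tr : ρ0.trace = 1 := by
      rw [hρ0def, Matrix.trace_smul, Matrix.trace_one, smul_eq_mul]
      simpa [mul_comm] using hnc
    have heigs0 : eigs ρ0 = fun _ => c := eigs_smul_one hc.le
    have hXlog : Real.log ((n : ℝ) * c ^ q) = (1 - q) * Real.log n := by
      rw [Real.log_mul hnne (ne_of_gt (Real.rpow_pos_of_pos hc q)),
        Real.log_rpow hc, hcdef, Real.log_inv]
      ring
    have hXpos : 0 < (n : ℝ) * c ^ q := mul_pos hn0 (Real.rpow_pos_of_pos hc q)
    have hR0 : renyiEntropy q ρ0 = Real.log n := by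
      unfold renyiEntropy
      rw [heigs0]
      rw [Finset.sum_const, Finset.card_univ, Fintype.card_fin, nsmul_eq_mul, hXlog]
      field_simp [sub_ne_zero.mpr (Ne.symm hq1)]
    have hσpsd : (Φ ρ0).PosSemidef := hpos ρ0 hρ0psd
    have hσtr : (Φ ρ0).trace = 1 := (htp ρ0).trans hρ0tr
    have hge : Real.log n ≤ renyiEntropy q (Φ ρ0) := by
      have := h ρ0 ⟨hρ0psd, hρ0tr⟩
      rwa [hR0] at this
    have hm0 : ∀ k, 0 ≤ eigs (Φ ρ0) k := eigs_nonneg hσpsd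
    have hmsum : ∑ k, eigs (Φ ρ0) k = 1 := sum_eigs_eq_one hσpsd.1 hσtr
    have hS : 0 < ∑ k, eigs (Φ ρ0) k ^ q := sum_rpow_pos hm0 hmsum hq0
    have hall : ∀ j, eigs (Φ ρ0) j = c := by
      by_contra hcontra
      push_neg at hcontra
      obtain ⟨j0, hj0⟩ := hcontra
      have hne : ∃ a ∈ Finset.univ, ∃ b ∈ (Finset.univ : Finset (Fin n)),
          eigs (Φ ρ0) a ≠ eigs (Φ ρ0) b := by
        by_contra hcon
        push_neg at hcon
        have hconst : ∀ j, eigs (Φ ρ0) j = eigs (Φ ρ0) j0 := fun j =>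
          hcon j (Finset.mem_univ j) j0 (Finset.mem_univ j0)
        have hs : (1 : ℝ) = n * eigs (Φ ρ0) j0 := by
          rw [← hmsum, Finset.sum_congr rfl fun j _ => hconst j, Finset.sum_const,
            Finset.card_univ, Fintype.card_fin, nsmul_eq_mul]
        apply hj0
        rw [hcdef]
        field_simp at hs ⊢
        linarith
      have hwsum : ∑ _j : Fin n, c = 1 := by
        rw [Finset.sum_const, Finset.card_univ, Fintype.card_fin, nsmul_eq_mul, hcdef]
        field_simp
      have hcenter : ∑ j, c • eigs (Φ ρ0) j = c := by
        simp only [smul_eq_mul]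
        rw [← Finset.mul_sum, hmsum, mul_one]
      rcases lt_or_gt_of_ne hq1 with hlt | hgt
      · -- q < 1, strict concave
        have hs := (Real.strictConcaveOn_rpow hq0 hlt).lt_map_sum
          (fun i _ => hc) hwsum (fun i _ => Set.mem_Ici.mpr (hm0 i)) hne
        -- hs : ∑ j, c • (eigs (Φ ρ0) j ^ q) < (∑ j, c • eigs (Φ ρ0) j) ^ q
        rw [hcenter] at hs
        have hs2 : c * ∑ j, eigs (Φ ρ0) j ^ q < c ^ q := by
          rw [Finset.mul_sum]
          simpa [smul_eq_mul] using hs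
        have hSlt : ∑ j, eigs (Φ ρ0) j ^ q < (n : ℝ) * c ^ q := by
          have := (mul_lt_mul_iff_right₀ hn0).mpr hs2
          rw [← mul_assoc, mul_inv_cancel₀ hnne, one_mul] at this
          exact this
        have h1q : 0 < 1 - q := by linarith
        have hle : (1 - q) * Real.log n ≤ Real.log (∑ k, eigs (Φ ρ0) k ^ q) := by
          rw [← hXlog]  -- only rewrites left side? no, rewrites occurrence
          have := hge
          unfold renyiEntropy at this
          rw [le_div_iff₀ h1q] at this
          calc Real.log ((n:ℝ) * c ^ q) = (1 - q) * Real.log n := hXlog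
            _ = Real.log n * (1 - q) := mul_comm _ _
            _ ≤ Real.log (∑ k, eigs (Φ ρ0) k ^ q) := this
        have : (n : ℝ) * c ^ q ≤ ∑ k, eigs (Φ ρ0) k ^ q := by
          rw [← Real.log_le_log_iff hXpos hS]
          calc Real.log ((n:ℝ) * c ^ q) = (1 - q) * Real.log n := hXlog
            _ ≤ Real.log (∑ k, eigs (Φ ρ0) k ^ q) := hle
        linarith
      · -- q > 1, strict convex
        have hs := (strictConvexOn_rpow hgt).map_sum_lt
          (fun i _ => hc) hwsum (fun i _ => Set.mem_Ici.mpr (hm0 i)) hne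
        rw [hcenter] at hs
        have hs2 : c ^ q < c * ∑ j, eigs (Φ ρ0) j ^ q := by
          rw [Finset.mul_sum]
          simpa [smul_eq_mul] using hs
        have hSgt : (n : ℝ) * c ^ q < ∑ j, eigs (Φ ρ0) j ^ q := by
          have := (mul_lt_mul_iff_right₀ hn0).mpr hs2
          rw [← mul_assoc, mul_inv_cancel₀ hnne, one_mul] at this
          exact this
        have h1q : 1 - q < 0 := by linarith
        have hle : Real.log (∑ k, eigs (Φ ρ0) k ^ q) ≤ (1 - q) * Real.log n := by
          have := hge
          unfold renyiEntropy at this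
          rw [le_div_iff_of_neg h1q] at this
          calc Real.log (∑ k, eigs (Φ ρ0) k ^ q) ≤ Real.log n * (1 - q) := this
            _ = (1 - q) * Real.log n := mul_comm _ _
        have : ∑ k, eigs (Φ ρ0) k ^ q ≤ (n : ℝ) * c ^ q := by
          rw [← Real.log_le_log_iff hS hXpos]
          calc Real.log (∑ k, eigs (Φ ρ0) k ^ q) ≤ (1 - q) * Real.log n := hle
            _ = Real.log ((n:ℝ) * c ^ q) := hXlog.symm
        linarith
    have hσeq : Φ ρ0 = ((c : ℝ) : ℂ) • 1 := by
      refine eq_smul_one_of_eigs_const hσpsd.1 fun k => ?_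
      have := hall k
      rwa [eigs_of_isHermitian hσpsd.1] at this
    have hone : (1 : Matrix (Fin n) (Fin n) ℂ) = ((n : ℝ) : ℂ) • ρ0 := by
      rw [hρ0def, smul_smul, hnc, one_smul]
    calc Φ 1 = ((n : ℝ) : ℂ) • Φ ρ0 := by rw [hone]; exact map_smul Φ _ _
      _ = ((n : ℝ) : ℂ) • (((c : ℝ) : ℂ) • 1) := by rw [hσeq]
      _ = 1 := by rw [smul_smul, hnc, one_smul]
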